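/- arXiv:1910.08251 — 4 statements merged into one kernel-verified Lean document; each statement's English description precedes it below -/
import Mathlib

section
/- A certificate of infeasibility certifies primal infeasibility: if a tuple of multipliers is dual feasible with ρ_t = 0 for all t = 0,…,T and σ_t = 0 for all t = 0,…,T−1, and its dual objective d for the data (x̄, (v̲_t), (v̄_t)) is strictly positive, then no trajectory is primal feasible for (x̄, (v̲_t), (v̄_t)). -/
open Matrix

/-- The squared Euclidean norm `|v|²` of a vector in `ℝ^k`. -/
noncomputable def sqNorm {k : ℕ} (v : Fin k → ℝ) : ℝ := ∑ i, v i ^ 2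

variable {n p q r c m : ℕ}

/-- Primal feasibility of a trajectory `((x_t)_{t=0}^T, (u_t)_{t=0}^{T-1})` for the data
`(x̄, (v̲_t), (v̄_t))` of the QP relaxation of the hybrid MPC problem. -/
def PrimalFeasible (T : ℕ)
    (A : Matrix (Fin n) (Fin n) ℝ) (B : Matrix (Fin n) (Fin p) ℝ)
    (F : Matrix (Fin c) (Fin n) ℝ) (G : Matrix (Fin c) (Fin p) ℝ)
    (V : Matrix (Fin m) (Fin p) ℝ) (h : Fin c → ℝ)
    (xbar : Fin n → ℝ) (vlo vhi : ℕ → Fin m → ℝ)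
    (x : ℕ → Fin n → ℝ) (u : ℕ → Fin p → ℝ) : Prop :=
  x 0 = xbar ∧
  (∀ t < T, x (t + 1) = A *ᵥ x t + B *ᵥ u t) ∧
  (∀ t < T, ∀ i, (F *ᵥ x t + G *ᵥ u t) i ≤ h i) ∧
  (∀ t < T, ∀ i, vlo t i ≤ (V *ᵥ u t) i ∧ (V *ᵥ u t) i ≤ vhi t i)

/-- Cost `Σ_{t=0}^T |Q x_t|² + Σ_{t=0}^{T-1} |R u_t|²` of a trajectory. -/
noncomputable def trajCost (T : ℕ) (Q : Matrix (Fin q) (Fin n) ℝ) (R : Matrix (Fin r) (Fin p) ℝ)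
    (x : ℕ → Fin n → ℝ) (u : ℕ → Fin p → ℝ) : ℝ :=
  ∑ t ∈ Finset.range (T + 1), sqNorm (Q *ᵥ x t) + ∑ t ∈ Finset.range T, sqNorm (R *ᵥ u t)

/-- Dual feasibility of a tuple of multipliers
`((λ_t, ρ_t)_{t=0}^T, (μ_t, ν̲_t, ν̄_t, σ_t)_{t=0}^{T-1})`.
Note that dual feasibility does not depend on the bound sequences `(v̲_t), (v̄_t)`
nor on the initial state `x̄`. -/
def DualFeasible (T : ℕ)
    (A : Matrix (Fin n) (Fin n) ℝ) (B : Matrix (Fin n) (Fin p) ℝ)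
    (Q : Matrix (Fin q) (Fin n) ℝ) (R : Matrix (Fin r) (Fin p) ℝ)
    (F : Matrix (Fin c) (Fin n) ℝ) (G : Matrix (Fin c) (Fin p) ℝ)
    (V : Matrix (Fin m) (Fin p) ℝ)
    (lam : ℕ → Fin n → ℝ) (rho : ℕ → Fin q → ℝ)
    (mu : ℕ → Fin c → ℝ) (nlo nhi : ℕ → Fin m → ℝ) (sig : ℕ → Fin r → ℝ) : Prop :=
  (∀ t < T, Qᵀ *ᵥ rho t + lam t - Aᵀ *ᵥ lam (t + 1) + Fᵀ *ᵥ mu t = 0) ∧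
  Qᵀ *ᵥ rho T + lam T = 0 ∧
  (∀ t < T, Rᵀ *ᵥ sig t - Bᵀ *ᵥ lam (t + 1) + Gᵀ *ᵥ mu t + Vᵀ *ᵥ (nhi t - nlo t) = 0) ∧
  (∀ t < T, ∀ i, 0 ≤ mu t i) ∧ (∀ t < T, ∀ i, 0 ≤ nlo t i) ∧ (∀ t < T, ∀ i, 0 ≤ nhi t i)

/-- The dual objective
`d := −Σ_{t=0}^T |ρ_t/2|² − Σ_{t=0}^{T−1}(|σ_t/2|² + hᵀμ_t + v̄_tᵀν̄_t − v̲_tᵀν̲_t) − x̄ᵀλ_0`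
for the data `(x̄, (v̲_t), (v̄_t))`. -/
noncomputable def dualObj (T : ℕ) (h : Fin c → ℝ) (xbar : Fin n → ℝ) (vlo vhi : ℕ → Fin m → ℝ)
    (lam : ℕ → Fin n → ℝ) (rho : ℕ → Fin q → ℝ)
    (mu : ℕ → Fin c → ℝ) (nlo nhi : ℕ → Fin m → ℝ) (sig : ℕ → Fin r → ℝ) : ℝ :=
  -(∑ t ∈ Finset.range (T + 1), sqNorm (fun i => rho t i / 2))
    - ∑ t ∈ Finset.range T,
        (sqNorm (fun i => sig t i / 2) + h ⬝ᵥ mu t + vhi t ⬝ᵥ nhi t - vlo t ⬝ᵥ nlo t)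
    - xbar ⬝ᵥ lam 0


private lemma dot_transpose_mulVec {a b : ℕ} (A : Matrix (Fin a) (Fin b) ℝ)
    (v : Fin b → ℝ) (w : Fin a → ℝ) :
    v ⬝ᵥ (Aᵀ *ᵥ w) = (A *ᵥ v) ⬝ᵥ w := by
  rw [Matrix.dotProduct_mulVec, Matrix.vecMul_transpose]

/-- A **certificate of infeasibility** certifies primal infeasibility: a dual-feasible
tuple with `ρ_t = 0` and `σ_t = 0` everywhere and strictly positive dual objective for
the data `(x̄, (v̲_t), (v̄_t))` shows that no trajectory is primal feasible for that data. -/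
theorem certificate_of_infeasibility (n p q r c m T : ℕ) (hT : 1 ≤ T)
    (A : Matrix (Fin n) (Fin n) ℝ) (B : Matrix (Fin n) (Fin p) ℝ)
    (Q : Matrix (Fin q) (Fin n) ℝ) (R : Matrix (Fin r) (Fin p) ℝ)
    (F : Matrix (Fin c) (Fin n) ℝ) (G : Matrix (Fin c) (Fin p) ℝ)
    (V : Matrix (Fin m) (Fin p) ℝ) (h : Fin c → ℝ)
    (xbar : Fin n → ℝ) (vlo vhi : ℕ → Fin m → ℝ)
    (lam : ℕ → Fin n → ℝ) (rho : ℕ → Fin q → ℝ)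
    (mu : ℕ → Fin c → ℝ) (nlo nhi : ℕ → Fin m → ℝ) (sig : ℕ → Fin r → ℝ)
    (hdual : DualFeasible T A B Q R F G V lam rho mu nlo nhi sig)
    (hrho : ∀ t ≤ T, rho t = 0) (hsig : ∀ t < T, sig t = 0)
    (hpos : 0 < dualObj T h xbar vlo vhi lam rho mu nlo nhi sig) :
    ¬ ∃ (x : ℕ → Fin n → ℝ) (u : ℕ → Fin p → ℝ),
        PrimalFeasible T A B F G V h xbar vlo vhi x u := by
  rintro ⟨x, u, hx0, hdyn, hineq, hbox⟩
  obtain ⟨hd1, hd2, hd3, hmu, hnlo, hnhi⟩ := hdual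
  have hlamT : lam T = 0 := by
    have h2 := hd2
    rw [hrho T le_rfl] at h2
    simpa using h2
  -- per-step multiplier relations
  have hlam : ∀ t < T, lam t = Aᵀ *ᵥ lam (t + 1) - Fᵀ *ᵥ mu t := by
    intro t ht
    have h1 := hd1 t ht
    rw [hrho t (le_of_lt ht)] at h1
    simp only [Matrix.mulVec_zero, zero_add] at h1
    funext i
    have := congrFun h1 i
    simp only [Pi.add_apply, Pi.sub_apply, Pi.zero_apply] at this
    simp only [Pi.sub_apply]
    linarith
  have hB : ∀ t < T, Bᵀ *ᵥ lam (t + 1) = Gᵀ *ᵥ mu t + Vᵀ *ᵥ (nhi t - nlo t) := by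
    intro t ht
    have h3 := hd3 t ht
    rw [hsig t ht] at h3
    simp only [Matrix.mulVec_zero, zero_sub] at h3
    funext i
    have := congrFun h3 i
    simp only [Pi.add_apply, Pi.sub_apply, Pi.neg_apply, Pi.zero_apply] at this
    simp only [Pi.add_apply]
    linarith
  -- per-step telescoping identity
  have key : ∀ t < T, x t ⬝ᵥ lam t - x (t + 1) ⬝ᵥ lam (t + 1) =
      -(mu t ⬝ᵥ (F *ᵥ x t + G *ᵥ u t)) - (nhi t - nlo t) ⬝ᵥ (V *ᵥ u t) := by
    intro t ht
    rw [hlam t ht, hdyn t ht]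
    have e1 : x t ⬝ᵥ (Aᵀ *ᵥ lam (t + 1) - Fᵀ *ᵥ mu t)
        = (A *ᵥ x t) ⬝ᵥ lam (t + 1) - (F *ᵥ x t) ⬝ᵥ mu t := by
      rw [dotProduct_sub, dot_transpose_mulVec, dot_transpose_mulVec]
    have e2 : (A *ᵥ x t + B *ᵥ u t) ⬝ᵥ lam (t + 1)
        = (A *ᵥ x t) ⬝ᵥ lam (t + 1) + ((G *ᵥ u t) ⬝ᵥ mu t + (V *ᵥ u t) ⬝ᵥ (nhi t - nlo t)) := by
      rw [add_dotProduct, ← dot_transpose_mulVec B (u t) (lam (t + 1)), hB t ht,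
        dotProduct_add, dot_transpose_mulVec, dot_transpose_mulVec]
    rw [e1, e2, dotProduct_add,
      dotProduct_comm (mu t) (F *ᵥ x t), dotProduct_comm (mu t) (G *ᵥ u t),
      dotProduct_comm (nhi t - nlo t)]
    ring
  -- telescoping sum
  have tele : ∑ t ∈ Finset.range T, (x t ⬝ᵥ lam t - x (t + 1) ⬝ᵥ lam (t + 1))
      = xbar ⬝ᵥ lam 0 := by
    rw [Finset.sum_range_sub' (fun t => x t ⬝ᵥ lam t), hlamT, hx0]
    simp
  have sum_eq : xbar ⬝ᵥ lam 0 = ∑ t ∈ Finset.range T,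
      (-(mu t ⬝ᵥ (F *ᵥ x t + G *ᵥ u t)) - (nhi t - nlo t) ⬝ᵥ (V *ᵥ u t)) := by
    rw [← tele]
    exact Finset.sum_congr rfl fun t ht => key t (Finset.mem_range.mp ht)
  -- compute dual objective
  have hd : dualObj T h xbar vlo vhi lam rho mu nlo nhi sig
      = ∑ t ∈ Finset.range T,
          (mu t ⬝ᵥ (F *ᵥ x t + G *ᵥ u t) - h ⬝ᵥ mu t
            + (nhi t - nlo t) ⬝ᵥ (V *ᵥ u t) - vhi t ⬝ᵥ nhi t + vlo t ⬝ᵥ nlo t) := by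
    unfold dualObj
    have hr : ∀ t ∈ Finset.range (T + 1), sqNorm (fun i => rho t i / 2) = 0 := by
      intro t ht
      rw [hrho t (Nat.lt_succ_iff.mp (Finset.mem_range.mp ht))]
      simp [sqNorm]
    have hs : ∀ t ∈ Finset.range T,
        (sqNorm (fun i => sig t i / 2) + h ⬝ᵥ mu t + vhi t ⬝ᵥ nhi t - vlo t ⬝ᵥ nlo t)
        = (h ⬝ᵥ mu t + vhi t ⬝ᵥ nhi t - vlo t ⬝ᵥ nlo t) := by
      intro t ht
      rw [hsig t (Finset.mem_range.mp ht)]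
      simp [sqNorm]
    rw [Finset.sum_congr rfl hr, Finset.sum_congr rfl hs, sum_eq]
    simp only [neg_zero, Finset.sum_const_zero, zero_sub]
    rw [← Finset.sum_neg_distrib, ← Finset.sum_sub_distrib]
    exact Finset.sum_congr rfl fun t _ => by ring
  -- each summand is ≤ 0
  have hle : ∀ t ∈ Finset.range T,
      (mu t ⬝ᵥ (F *ᵥ x t + G *ᵥ u t) - h ⬝ᵥ mu t
        + (nhi t - nlo t) ⬝ᵥ (V *ᵥ u t) - vhi t ⬝ᵥ nhi t + vlo t ⬝ᵥ nlo t) ≤ 0 := by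
    intro t ht
    have ht' := Finset.mem_range.mp ht
    have b1 : mu t ⬝ᵥ (F *ᵥ x t + G *ᵥ u t) ≤ h ⬝ᵥ mu t := by
      rw [dotProduct_comm h]
      exact Finset.sum_le_sum fun i _ =>
        mul_le_mul_of_nonneg_left (hineq t ht' i) (hmu t ht' i)
    have b2 : nhi t ⬝ᵥ (V *ᵥ u t) ≤ vhi t ⬝ᵥ nhi t := by
      rw [dotProduct_comm (vhi t)]
      exact Finset.sum_le_sum fun i _ =>
        mul_le_mul_of_nonneg_left ((hbox t ht' i).2) (hnhi t ht' i)
    have b3 : vlo t ⬝ᵥ nlo t ≤ nlo t ⬝ᵥ (V *ᵥ u t) := by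
      rw [dotProduct_comm (vlo t)]
      exact Finset.sum_le_sum fun i _ =>
        mul_le_mul_of_nonneg_left ((hbox t ht' i).1) (hnlo t ht' i)
    have e : (nhi t - nlo t) ⬝ᵥ (V *ᵥ u t)
        = nhi t ⬝ᵥ (V *ᵥ u t) - nlo t ⬝ᵥ (V *ᵥ u t) := sub_dotProduct _ _ _
    rw [e]
    linarith
  have : dualObj T h xbar vlo vhi lam rho mu nlo nhi sig ≤ 0 := by
    rw [hd]
    exact Finset.sum_nonpos hle
  linarith
end

section
/- Validity of the shifted initial cover (Proposition of Section IV): let 𝒮 be a finite collection of pairs (v̲, v̄) of vectors in ℝ^{Tm} with all entries in {0,1} and v̲ ≤ v̄ componentwise, such that the boxes [v̲, v̄] := {z ∈ ℝ^{Tm} : v̲ ≤ z ≤ v̄} are pairwise disjoint and their union contains {0,1}^{Tm}. Fix v₀ ∈ {0,1}^m and view ℝ^{Tm} as T consecutive blocks of ℝ^m, writing v̲ = (v̲⁰,…,v̲^{T−1}) and v̄ = (v̄⁰,…,v̄^{T−1}). Let 𝒮' be the collection of shifted pairs ((v̲¹,…,v̲^{T−1}, 0), (v̄¹,…,v̄^{T−1},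 1)) over all (v̲, v̄) ∈ 𝒮 with v̲⁰ ≤ v₀ ≤ v̄⁰, where 0 and 1 denote the all-zeros and all-ones vectors of ℝ^m. Then the union of the boxes of 𝒮' contains {0,1}^{Tm}, and for any two retained members of 𝒮 whose shifted boxes have a common point, the two members coincide (i.e., the boxes of 𝒮' are pairwise disjoint). -/
/-- Membership of `z ∈ ℝ^{Tm}` (viewed as `T` blocks of `ℝ^m`) in the box `[v̲, v̄]`. -/
def InBox {T m : ℕ} (vlo vhi z : Fin T → Fin m → ℝ) : Prop :=
  ∀ t i, vlo t i ≤ z t i ∧ z t i ≤ vhi t i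

/-- Shift of a lower bound one step backwards in time, appending the all-zeros block. -/
noncomputable def shiftLo {T m : ℕ} (vlo : Fin T → Fin m → ℝ) : Fin T → Fin m → ℝ :=
  fun t => if ht : (t : ℕ) + 1 < T then vlo ⟨(t : ℕ) + 1, ht⟩ else fun _ => 0

/-- Shift of an upper bound one step backwards in time, appending the all-ones block. -/
noncomputable def shiftHi {T m : ℕ} (vhi : Fin T → Fin m → ℝ) : Fin T → Fin m → ℝ :=
  fun t => if ht : (t : ℕ) + 1 < T then vhi ⟨(t : ℕ) + 1, ht⟩ else fun _ => 1

/-- Helper: assemble `v0` followed by the first `T-1` blocks of `z`. -/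
noncomputable def assemble {T m : ℕ} (hT : 0 < T) (v0 : Fin m → ℝ)
    (z : Fin T → Fin m → ℝ) : Fin T → Fin m → ℝ :=
  fun t => if h : (t : ℕ) = 0 then v0 else z ⟨(t : ℕ) - 1, by omega⟩

lemma assemble_inBox {T m : ℕ} (hT : 0 < T) (v0 : Fin m → ℝ)
    (z : Fin T → Fin m → ℝ) (s : (Fin T → Fin m → ℝ) × (Fin T → Fin m → ℝ))
    (hret : ∀ i, s.1 ⟨0, hT⟩ i ≤ v0 i ∧ v0 i ≤ s.2 ⟨0, hT⟩ i)
    (hz : InBox (shiftLo s.1) (shiftHi s.2) z) :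
    InBox s.1 s.2 (assemble hT v0 z) := by
  intro t i
  unfold assemble
  by_cases h : (t : ℕ) = 0
  · simp only [h, dif_pos]
    have : t = ⟨0, hT⟩ := Fin.ext h
    rw [this]
    exact hret i
  · simp only [h, dif_neg]
    have ht1 : (t : ℕ) - 1 + 1 < T := by omega
    have h1 := hz ⟨(t : ℕ) - 1, by omega⟩ i
    unfold shiftLo shiftHi at h1
    simp only [dif_pos ht1] at h1
    have : (⟨(t : ℕ) - 1 + 1, ht1⟩ : Fin T) = t := Fin.ext (by simp only [Fin.val_mk]; omega)
    rwa [this] at h1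

/-- **Validity of the shifted initial cover:** if the boxes of a finite collection `S` of
binary pairs `(v̲, v̄)` are pairwise disjoint and cover `{0,1}^{Tm}`, then the shifted
boxes of the members retained by the binary action `v₀` (those with `v̲⁰ ≤ v₀ ≤ v̄⁰`)
cover `{0,1}^{Tm}`, and any two retained members whose shifted boxes share a point
coincide. -/
theorem shifted_cover_valid (T m : ℕ) (hT : 0 < T) (hm : 0 < m)
    (S : Finset ((Fin T → Fin m → ℝ) × (Fin T → Fin m → ℝ)))
    (hbin : ∀ s ∈ S, (∀ t i, s.1 t i = 0 ∨ s.1 t i = 1) ∧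
      (∀ t i, s.2 t i = 0 ∨ s.2 t i = 1) ∧ (∀ t i, s.1 t i ≤ s.2 t i))
    (hdisj : ∀ s₁ ∈ S, ∀ s₂ ∈ S, s₁ ≠ s₂ →
      ∀ z : Fin T → Fin m → ℝ, ¬ (InBox s₁.1 s₁.2 z ∧ InBox s₂.1 s₂.2 z))
    (hcover : ∀ z : Fin T → Fin m → ℝ, (∀ t i, z t i = 0 ∨ z t i = 1) →
      ∃ s ∈ S, InBox s.1 s.2 z)
    (v0 : Fin m → ℝ) (hv0 : ∀ i, v0 i = 0 ∨ v0 i = 1) :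
    (∀ z : Fin T → Fin m → ℝ, (∀ t i, z t i = 0 ∨ z t i = 1) →
      ∃ s ∈ S, (∀ i, s.1 ⟨0, hT⟩ i ≤ v0 i ∧ v0 i ≤ s.2 ⟨0, hT⟩ i) ∧
        InBox (shiftLo s.1) (shiftHi s.2) z)
    ∧ (∀ s₁ ∈ S, ∀ s₂ ∈ S,
        (∀ i, s₁.1 ⟨0, hT⟩ i ≤ v0 i ∧ v0 i ≤ s₁.2 ⟨0, hT⟩ i) →
        (∀ i, s₂.1 ⟨0, hT⟩ i ≤ v0 i ∧ v0 i ≤ s₂.2 ⟨0, hT⟩ i) →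
        (∃ z : Fin T → Fin m → ℝ,
          InBox (shiftLo s₁.1) (shiftHi s₁.2) z ∧ InBox (shiftLo s₂.1) (shiftHi s₂.2) z) →
        s₁ = s₂) := by
  constructor
  · intro z hzbin
    obtain ⟨s, hsS, hs⟩ := hcover (assemble hT v0 z)
      (by
        intro t i
        unfold assemble
        by_cases h : (t : ℕ) = 0
        · simp only [h, dif_pos]; exact hv0 i
        · simp only [h, dif_neg]; exact hzbin _ i)
    refine ⟨s, hsS, ?_, ?_⟩
    · intro i
      have h0 := hs ⟨0, hT⟩ i
      unfold assemble at h0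
      simpa using h0
    · intro t i
      unfold shiftLo shiftHi
      by_cases ht : (t : ℕ) + 1 < T
      · simp only [dif_pos ht]
        have h1 := hs ⟨(t : ℕ) + 1, ht⟩ i
        unfold assemble at h1
        simp only [show ((⟨(t : ℕ) + 1, ht⟩ : Fin T) : ℕ) ≠ 0 by simp, dif_neg] at h1
        have : (⟨(⟨(t : ℕ) + 1, ht⟩ : Fin T) - 1, by omega⟩ : Fin T) = t := by
          apply Fin.ext; simp
        rwa [this] at h1
      · simp only [dif_neg ht]
        rcases hzbin t i with h | h <;> rw [h] <;> norm_num
  · intro s₁ h₁ s₂ h₂ hret₁ hret₂ ⟨z, hz₁, hz₂⟩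
    by_contra hne
    exact hdisj s₁ h₁ s₂ h₂ hne (assemble hT v0 z)
      ⟨assemble_inBox hT v0 z s₁ hret₁ hz₁, assemble_inBox hT v0 z s₂ hret₂ hz₂⟩
end

section
/- Proposition (nonnegativity of π₇ under constraint-set growth): for s = 0,…,T−1 let 𝒟_s := {(x, u) ∈ ℝ^n × ℝ^p : F_s x + G_s u ≤ h_s} be nonempty. For t = 0,…,T−2 let M_t ∈ ℝ^{c_t×c_{t+1}} have nonnegative entries with F_tᵀM_t = F_{t+1}ᵀ and G_tᵀM_t = G_{t+1}ᵀ, and suppose each column M_t e_i is optimal for the linear program min h_tᵀν subject to F_tᵀν = F_{t+1}ᵀe_i, G_tᵀν = G_{t+1}ᵀe_i, ν ≥ 0 (i.e., h_tᵀ(M_t e_i) ≤ h_tᵀν for every feasible ν). If 𝒟_t ⊆ 𝒟_{t+1} for all t = 0,…,T−2, then for every family of componentwise-nonnegative vectors μ_{t+1} ∈ ℝ^{c_{t+1}} (t = 0,…,T−2), the quantity π₇ := Σ_{t=0}^{T−2}(h_{t+1}ᵀμ_{t+1} − h_tᵀ(M_t μ_{t+1})) is nonnegative. -/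
open Matrix

/-- Farkas' lemma for finitely generated cones, by induction on the number of generators. -/
lemma farkas_cone {α : Type*} [Fintype α] :
    ∀ (m : ℕ) (v : Fin m → α → ℝ) (b : α → ℝ),
    (∃ c : Fin m → ℝ, (∀ i, 0 ≤ c i) ∧ ∑ i, c i • v i = b) ∨
    (∃ y : α → ℝ, (∀ i, 0 ≤ v i ⬝ᵥ y) ∧ b ⬝ᵥ y < 0) := by
  intro m
  induction m with
  | zero =>
    intro v b
    by_cases hb : b = 0
    · exact Or.inl ⟨fun _ => 0, fun i => le_refl 0, by simp [hb]⟩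
    · refine Or.inr ⟨-b, fun i => i.elim0, ?_⟩
      have h1 : b ⬝ᵥ b ≠ 0 := fun h => hb (dotProduct_self_eq_zero.mp h)
      have h2 : 0 ≤ b ⬝ᵥ b := Finset.sum_nonneg fun i _ => mul_self_nonneg _
      have h3 : 0 < b ⬝ᵥ b := lt_of_le_of_ne h2 (Ne.symm h1)
      simpa [dotProduct_neg] using h3
  | succ m ih =>
    intro v b
    set v' : Fin m → α → ℝ := fun i => v i.castSucc with hv'
    set w : α → ℝ := v (Fin.last m) with hwdef
    rcases ih v' b with ⟨c, hc, hsum⟩ | ⟨y, hy, hby⟩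
    · left
      refine ⟨Fin.snoc c 0, ?_, ?_⟩
      · intro i
        refine Fin.lastCases ?_ ?_ i
        · simp
        · intro j; simpa using hc j
      · rw [Fin.sum_univ_castSucc]
        simp only [Fin.snoc_castSucc, Fin.snoc_last, zero_smul, add_zero]
        exact hsum
    · by_cases hwy : 0 ≤ w ⬝ᵥ y
      · right
        exact ⟨y, fun i => Fin.lastCases hwy hy i, hby⟩
      · push_neg at hwy
        have hwny : w ⬝ᵥ y ≠ 0 := ne_of_lt hwy
        set r : (α → ℝ) → ℝ := fun u => (u ⬝ᵥ y) / (w ⬝ᵥ y) with hrdef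
        rcases ih (fun i => v' i - r (v' i) • w) (b - r b • w) with
          ⟨c, hc, hsum⟩ | ⟨y', hy', hby'⟩
        · left
          have hrb : 0 < r b := div_pos_iff.mpr (Or.inr ⟨hby, hwy⟩)
          have hri : ∀ i, r (v' i) ≤ 0 := fun i =>
            div_nonpos_iff.mpr (Or.inl ⟨hy i, hwy.le⟩)
          set cl : ℝ := r b - ∑ i, c i * r (v' i) with hcl
          have hclnn : 0 ≤ cl := by
            have : ∑ i, c i * r (v' i) ≤ 0 :=
              Finset.sum_nonpos fun i _ => mul_nonpos_of_nonneg_of_nonpos (hc i) (hri i)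
            simp only [hcl]; linarith
          refine ⟨Fin.snoc c cl, ?_, ?_⟩
          · intro i
            refine Fin.lastCases ?_ ?_ i
            · simpa using hclnn
            · intro j; simpa using hc j
          · simp only [smul_sub, smul_smul] at hsum
            rw [Finset.sum_sub_distrib, ← Finset.sum_smul] at hsum
            rw [Fin.sum_univ_castSucc]
            simp only [Fin.snoc_castSucc, Fin.snoc_last]
            rw [sub_eq_iff_eq_add.mp hsum]
            simp only [hcl, sub_smul]
            abel
        · right
          refine ⟨y' - ((w ⬝ᵥ y') / (w ⬝ᵥ y)) • y, ?_, ?_⟩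
          · have key : ∀ u : α → ℝ,
                u ⬝ᵥ (y' - ((w ⬝ᵥ y') / (w ⬝ᵥ y)) • y) = (u - r u • w) ⬝ᵥ y' := by
              intro u
              simp only [dotProduct_sub, sub_dotProduct,
                dotProduct_smul, smul_dotProduct, smul_eq_mul, hrdef]
              field_simp
            intro i
            refine Fin.lastCases ?_ ?_ i
            · rw [show v (Fin.last m) = w from rfl, key w]
              have : r w = 1 := div_self hwny
              rw [this, one_smul, sub_self, zero_dotProduct]
            · intro j
              rw [show v j.castSucc = v' j from rfl, key (v' j)]
              exact hy' j
          · have key : b ⬝ᵥ (y' - ((w ⬝ᵥ y') / (w ⬝ᵥ y)) • y) = (b - r b • w) ⬝ᵥ y' := by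
              simp only [dotProduct_sub, sub_dotProduct,
                dotProduct_smul, smul_dotProduct, smul_eq_mul, hrdef]
              field_simp
            rw [key]
            exact hby'

/-- Affine Farkas / LP duality: if the polyhedron `{(x,u) : F x + G u ≤ h}` is nonempty and
the linear functional `(x,u) ↦ wF⬝x + wG⬝u` is bounded by `β` on it, then there is a
nonnegative multiplier vector certifying this. -/
lemma affine_farkas {m n p : ℕ} (F : Matrix (Fin m) (Fin n) ℝ) (G : Matrix (Fin m) (Fin p) ℝ)
    (h : Fin m → ℝ) (wF : Fin n → ℝ) (wG : Fin p → ℝ) (β : ℝ)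
    (hfeas : ∃ (x : Fin n → ℝ) (u : Fin p → ℝ), ∀ i, (F *ᵥ x + G *ᵥ u) i ≤ h i)
    (hbound : ∀ (x : Fin n → ℝ) (u : Fin p → ℝ), (∀ i, (F *ᵥ x + G *ᵥ u) i ≤ h i) →
      wF ⬝ᵥ x + wG ⬝ᵥ u ≤ β) :
    ∃ ν : Fin m → ℝ, (∀ i, 0 ≤ ν i) ∧ Fᵀ *ᵥ ν = wF ∧ Gᵀ *ᵥ ν = wG ∧ h ⬝ᵥ ν ≤ β := by
  classical
  set α := (Fin n ⊕ Fin p) ⊕ Unit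
  set row : Fin m → α → ℝ := fun i => Sum.elim (Sum.elim (F i) (G i)) (fun _ => h i) with hrow
  set e : α → ℝ := Sum.elim (Sum.elim 0 0) (fun _ => 1) with he
  set v : Fin (m + 1) → α → ℝ := Fin.snoc row e with hv
  set bb : α → ℝ := Sum.elim (Sum.elim wF wG) (fun _ => β) with hbb
  rcases farkas_cone (m + 1) v bb with ⟨c, hc, hsum⟩ | ⟨y, hy, hby⟩
  · refine ⟨fun i => c i.castSucc, fun i => hc _, ?_, ?_, ?_⟩
    · funext j
      have := congrFun hsum (Sum.inl (Sum.inl j))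
      rw [Fin.sum_univ_castSucc] at this
      simp only [hv, Fin.snoc_castSucc, Fin.snoc_last, Finset.sum_apply, Pi.add_apply,
        Pi.smul_apply, smul_eq_mul, hrow, he, hbb, Sum.elim_inl, Pi.zero_apply, mul_zero,
        add_zero] at this
      simp only [Matrix.mulVec, dotProduct, Matrix.transpose_apply]
      rw [← this]
      exact Finset.sum_congr rfl fun i _ => by ring
    · funext j
      have := congrFun hsum (Sum.inl (Sum.inr j))
      rw [Fin.sum_univ_castSucc] at this
      simp only [hv, Fin.snoc_castSucc, Fin.snoc_last, Finset.sum_apply, Pi.add_apply,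
        Pi.smul_apply, smul_eq_mul, hrow, he, hbb, Sum.elim_inl, Sum.elim_inr, Pi.zero_apply,
        mul_zero, add_zero] at this
      simp only [Matrix.mulVec, dotProduct, Matrix.transpose_apply]
      rw [← this]
      exact Finset.sum_congr rfl fun i _ => by ring
    · have := congrFun hsum (Sum.inr ())
      rw [Fin.sum_univ_castSucc] at this
      simp only [hv, Fin.snoc_castSucc, Fin.snoc_last, Finset.sum_apply, Pi.add_apply,
        Pi.smul_apply, smul_eq_mul, hrow, he, hbb, Sum.elim_inr, mul_one] at this
      have hlast : 0 ≤ c (Fin.last m) := hc _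
      have hdp : h ⬝ᵥ (fun i => c i.castSucc) = ∑ i, c i.castSucc * h i :=
        Finset.sum_congr rfl fun i _ => by ring
      rw [hdp]
      linarith [this]
  · -- separation case: derive a contradiction
    exfalso
    set x : Fin n → ℝ := fun j => y (Sum.inl (Sum.inl j)) with hx
    set u : Fin p → ℝ := fun j => y (Sum.inl (Sum.inr j)) with hu
    set γ : ℝ := y (Sum.inr ()) with hγ
    have hyeq : y = Sum.elim (Sum.elim x u) (fun _ => γ) := by
      funext a
      rcases a with (a | a) | a
      · rfl
      · rfl
      · rfl
    have hγnn : 0 ≤ γ := by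
      have := hy (Fin.last m)
      simp only [hv, Fin.snoc_last, he, hyeq] at this
      rw [sumElim_dotProduct_sumElim, sumElim_dotProduct_sumElim] at this
      simpa [dotProduct] using this
    have hrows : ∀ i : Fin m, 0 ≤ F i ⬝ᵥ x + G i ⬝ᵥ u + h i * γ := by
      intro i
      have := hy i.castSucc
      simp only [hv, Fin.snoc_castSucc, hrow, hyeq] at this
      rw [sumElim_dotProduct_sumElim, sumElim_dotProduct_sumElim] at this
      simpa [dotProduct, add_assoc] using this
    have hobj : wF ⬝ᵥ x + wG ⬝ᵥ u + β * γ < 0 := by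
      have := hby
      rw [hbb, hyeq, sumElim_dotProduct_sumElim,
        sumElim_dotProduct_sumElim] at this
      simpa [dotProduct, add_assoc] using this
    clear_value x u γ
    rcases eq_or_lt_of_le hγnn with hγ0 | hγpos
    · -- γ = 0 : unboundedness contradiction
      obtain ⟨x₀, u₀, hx₀⟩ := hfeas
      have hs : wF ⬝ᵥ x + wG ⬝ᵥ u < 0 := by
        rw [← hγ0] at hobj; simpa using hobj
      obtain ⟨τ, hτnn, hτs⟩ : ∃ τ : ℝ, 0 ≤ τ ∧
          τ * (wF ⬝ᵥ x + wG ⬝ᵥ u) < (wF ⬝ᵥ x₀ + wG ⬝ᵥ u₀) - β := by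
        refine ⟨max 0 (((wF ⬝ᵥ x₀ + wG ⬝ᵥ u₀) - β) / (wF ⬝ᵥ x + wG ⬝ᵥ u) + 1),
          le_max_left _ _, ?_⟩
        set s := wF ⬝ᵥ x + wG ⬝ᵥ u with hsdef
        set d := (wF ⬝ᵥ x₀ + wG ⬝ᵥ u₀) - β with hddef
        have h1 : (max 0 (d / s + 1)) * s ≤ (d / s + 1) * s :=
          mul_le_mul_of_nonpos_right (le_max_right _ _) hs.le
        have h2 : (d / s + 1) * s = d + s := by
          rw [add_mul, one_mul, div_mul_cancel₀ _ (ne_of_lt hs)]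
        linarith
      have hfeas' : ∀ i, (F *ᵥ (x₀ - τ • x) + G *ᵥ (u₀ - τ • u)) i ≤ h i := by
        intro i
        have hri := hrows i
        rw [← hγ0] at hri
        have hri' : 0 ≤ F i ⬝ᵥ x + G i ⬝ᵥ u := by simpa using hri
        have hmul : 0 ≤ τ * (F i ⬝ᵥ x + G i ⬝ᵥ u) := mul_nonneg hτnn hri'
        have hfx := hx₀ i
        have e1 : (F *ᵥ x₀ + G *ᵥ u₀) i = F i ⬝ᵥ x₀ + G i ⬝ᵥ u₀ := rfl
        rw [e1] at hfx
        show (F i) ⬝ᵥ (x₀ - τ • x) + (G i) ⬝ᵥ (u₀ - τ • u) ≤ h i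
        rw [dotProduct_sub, dotProduct_sub, dotProduct_smul,
          dotProduct_smul, smul_eq_mul, smul_eq_mul]
        nlinarith [hmul, hfx]
      have hbd := hbound _ _ hfeas'
      rw [dotProduct_sub, dotProduct_sub, dotProduct_smul,
        dotProduct_smul, smul_eq_mul, smul_eq_mul] at hbd
      nlinarith [hτs, hbd]
    · -- γ > 0 : scaling contradiction
      have hγinv : 0 < γ⁻¹ := inv_pos.mpr hγpos
      have hγγ : γ * γ⁻¹ = 1 := mul_inv_cancel₀ (ne_of_gt hγpos)
      have hfeas' : ∀ i, (F *ᵥ ((-γ⁻¹) • x) + G *ᵥ ((-γ⁻¹) • u)) i ≤ h i := by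
        intro i
        have hri := hrows i
        have hmul : 0 ≤ γ⁻¹ * (F i ⬝ᵥ x + G i ⬝ᵥ u + h i * γ) := mul_nonneg hγinv.le hri
        have hcan : γ⁻¹ * (h i * γ) = h i := by field_simp
        show (F i) ⬝ᵥ ((-γ⁻¹) • x) + (G i) ⬝ᵥ ((-γ⁻¹) • u) ≤ h i
        rw [dotProduct_smul, dotProduct_smul, smul_eq_mul, smul_eq_mul]
        nlinarith [hmul, hcan]
      have hb := hbound _ _ hfeas'
      rw [dotProduct_smul, dotProduct_smul, smul_eq_mul, smul_eq_mul] at hb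
      have h3 : γ⁻¹ * (wF ⬝ᵥ x + wG ⬝ᵥ u + β * γ) < 0 := mul_neg_of_pos_of_neg hγinv hobj
      have hcan : γ⁻¹ * (β * γ) = β := by field_simp
      nlinarith [h3, hcan, hb]


/-- **Nonnegativity of π₇ under constraint-set growth:** with nonempty polyhedra
`𝒟_s = {(x,u) : F_s x + G_s u ≤ h_s}`, matrices `M_t ≥ 0` with `F_tᵀ M_t = F_{t+1}ᵀ`,
`G_tᵀ M_t = G_{t+1}ᵀ` whose columns are optimal for the containment LPs, and
`𝒟_t ⊆ 𝒟_{t+1}` for all `t = 0,…,T−2`, the quantity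
`π₇ = Σ_{t=0}^{T−2}(h_{t+1}ᵀ μ_{t+1} − h_tᵀ (M_t μ_{t+1}))` is nonnegative for every
family of componentwise-nonnegative vectors `μ_{t+1}`. -/
theorem pi7_nonneg (n p T : ℕ) (hT : 2 ≤ T)
    (cdim : ℕ → ℕ)
    (F : (s : ℕ) → Matrix (Fin (cdim s)) (Fin n) ℝ)
    (G : (s : ℕ) → Matrix (Fin (cdim s)) (Fin p) ℝ)
    (h : (s : ℕ) → Fin (cdim s) → ℝ)
    (hne : ∀ s < T, ∃ (x : Fin n → ℝ) (u : Fin p → ℝ),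
      ∀ i, (F s *ᵥ x + G s *ᵥ u) i ≤ h s i)
    (M : (t : ℕ) → Matrix (Fin (cdim t)) (Fin (cdim (t + 1))) ℝ)
    (hMnn : ∀ t < T - 1, ∀ i j, 0 ≤ M t i j)
    (hMF : ∀ t < T - 1, (F t)ᵀ * M t = (F (t + 1))ᵀ)
    (hMG : ∀ t < T - 1, (G t)ᵀ * M t = (G (t + 1))ᵀ)
    (hopt : ∀ t < T - 1, ∀ i : Fin (cdim (t + 1)), ∀ ν : Fin (cdim t) → ℝ,
      (∀ j, 0 ≤ ν j) →
      (F t)ᵀ *ᵥ ν = F (t + 1) i →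
      (G t)ᵀ *ᵥ ν = G (t + 1) i →
      h t ⬝ᵥ (fun j => M t j i) ≤ h t ⬝ᵥ ν)
    (hsub : ∀ t < T - 1, ∀ (x : Fin n → ℝ) (u : Fin p → ℝ),
      (∀ i, (F t *ᵥ x + G t *ᵥ u) i ≤ h t i) →
      (∀ i, (F (t + 1) *ᵥ x + G (t + 1) *ᵥ u) i ≤ h (t + 1) i))
    (μ : (t : ℕ) → Fin (cdim (t + 1)) → ℝ)
    (hμ : ∀ t < T - 1, ∀ i, 0 ≤ μ t i) :
    0 ≤ ∑ t ∈ Finset.range (T - 1), (h (t + 1) ⬝ᵥ μ t - h t ⬝ᵥ (M t *ᵥ μ t)) := by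
  apply Finset.sum_nonneg
  intro t ht
  rw [Finset.mem_range] at ht
  -- columnwise bound: `h t ⬝ᵥ (column i of M t) ≤ h (t+1) i`
  have hcol : ∀ i : Fin (cdim (t + 1)), h t ⬝ᵥ (fun j => M t j i) ≤ h (t + 1) i := by
    intro i
    obtain ⟨ν, hνnn, hνF, hνG, hνh⟩ := affine_farkas (F t) (G t) (h t)
      (F (t + 1) i) (G (t + 1) i) (h (t + 1) i)
      (hne t (by omega))
      (by
        intro x u hxu
        have := hsub t ht x u hxu i
        have e1 : (F (t + 1) *ᵥ x + G (t + 1) *ᵥ u) i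
            = F (t + 1) i ⬝ᵥ x + G (t + 1) i ⬝ᵥ u := rfl
        rw [e1] at this
        exact this)
    exact le_trans (hopt t ht i ν hνnn hνF hνG) hνh
  -- expand the dot product through the matrix-vector product
  have expand : h t ⬝ᵥ (M t *ᵥ μ t) = ∑ i, μ t i * (h t ⬝ᵥ fun j => M t j i) := by
    calc h t ⬝ᵥ (M t *ᵥ μ t)
        = ∑ j, ∑ i, h t j * (M t j i * μ t i) := by
          simp only [dotProduct, Matrix.mulVec, Finset.mul_sum]
      _ = ∑ i, ∑ j, h t j * (M t j i * μ t i) := Finset.sum_comm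
      _ = ∑ i, μ t i * (h t ⬝ᵥ fun j => M t j i) := by
          refine Finset.sum_congr rfl fun i _ => ?_
          simp only [dotProduct, Finset.mul_sum]
          exact Finset.sum_congr rfl fun j _ => by ring
  rw [expand]
  have hlhs : h (t + 1) ⬝ᵥ μ t = ∑ i, μ t i * h (t + 1) i :=
    Finset.sum_congr rfl fun i _ => mul_comm _ _
  rw [hlhs, ← Finset.sum_sub_distrib]
  apply Finset.sum_nonneg
  intro i _
  rw [← mul_sub]
  exact mul_nonneg (hμ t ht i) (sub_nonneg.mpr (hcol i))
end

section
/- Lemma 1 for stage costs varying with the relative time (Section VII-A): let Q_t ∈ ℝ^{q_t×n} (t = 0,…,T) and R_t ∈ ℝ^{r_t×p} (t = 0,…,T−1) be time-varying weight matrices. Say that multipliers λ_t ∈ ℝ^n, ρ_t ∈ ℝ^{q_t} (t = 0,…,T) and μ_t ∈ ℝ^c, ν̲_t, ν̄_t ∈ ℝ^m, σ_t ∈ ℝ^{r_t} (t = 0,…,T−1) are dual feasible for the time-varying problem if Q_tᵀρ_t + λ_t − Aᵀλ_{t+1} + Fᵀμ_t = 0 for t = 0,…,T−1, Q_Tᵀρ_T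 + λ_T = 0, R_tᵀσ_t − Bᵀλ_{t+1} + Gᵀμ_t + Vᵀ(ν̄_t − ν̲_t) = 0 for t = 0,…,T−1, and μ_t, ν̲_t, ν̄_t ≥ 0 componentwise. Given such a dual-feasible tuple, suppose ρ'_t ∈ ℝ^{q_t} (t = 0,…,T−1) and σ'_t ∈ ℝ^{r_t} (t = 0,…,T−2) satisfy Q_tᵀρ'_t = Q_{t+1}ᵀρ_{t+1} and R_tᵀσ'_t = R_{t+1}ᵀσ_{t+1} (such solutions exist whenever the row space of Q_{t+1} is contained in that of Q_t and the row space of R_{t+1} is contained in that of R_t). Then the multipliers defined by λ'_t := λ_{t+1} for t = 0,…,T−1, λ'_T := 0, ρ'_T := 0, (μ'_t, ν̲'_t, ν̄'_t) := (μ_{t+1}, ν̲_{t+1}, ν̄_{t+1}) for t = 0,…,T−2, σ'_{T−1} := 0, and (μ'_{T−1}, ν̲'_{T−1}, ν̄'_{T−1}) := 0, together with (ρ'_t)_{t=0}^T and (σ'_t)_{t=0}^{T−1}, are dual feasible for the time-varying problem. -/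
open Matrix

/-- Dual feasibility for the hybrid MPC subproblem with stage costs varying with the
relative time: weight matrices `Q_t` (t = 0,…,T) and `R_t` (t = 0,…,T−1). -/
def DualFeasibleTV (n p c m T : ℕ) (qd rd : ℕ → ℕ)
    (A : Matrix (Fin n) (Fin n) ℝ) (B : Matrix (Fin n) (Fin p) ℝ)
    (Q : (t : ℕ) → Matrix (Fin (qd t)) (Fin n) ℝ)
    (R : (t : ℕ) → Matrix (Fin (rd t)) (Fin p) ℝ)
    (F : Matrix (Fin c) (Fin n) ℝ) (G : Matrix (Fin c) (Fin p) ℝ)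
    (V : Matrix (Fin m) (Fin p) ℝ)
    (lam : ℕ → Fin n → ℝ) (rho : (t : ℕ) → Fin (qd t) → ℝ)
    (mu : ℕ → Fin c → ℝ) (nlo nhi : ℕ → Fin m → ℝ)
    (sig : (t : ℕ) → Fin (rd t) → ℝ) : Prop :=
  (∀ t < T, (Q t)ᵀ *ᵥ rho t + lam t - Aᵀ *ᵥ lam (t + 1) + Fᵀ *ᵥ mu t = 0) ∧
  (Q T)ᵀ *ᵥ rho T + lam T = 0 ∧
  (∀ t < T, (R t)ᵀ *ᵥ sig t - Bᵀ *ᵥ lam (t + 1) + Gᵀ *ᵥ mu t + Vᵀ *ᵥ (nhi t - nlo t) = 0) ∧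
  (∀ t < T, ∀ i, 0 ≤ mu t i) ∧ (∀ t < T, ∀ i, 0 ≤ nlo t i) ∧ (∀ t < T, ∀ i, 0 ≤ nhi t i)

/-- **Lemma 1 for stage costs varying with the relative time:** given a dual-feasible
tuple and vectors `ρ'_t`, `σ'_t` solving `Q_tᵀ ρ'_t = Q_{t+1}ᵀ ρ_{t+1}` (t = 0,…,T−1)
and `R_tᵀ σ'_t = R_{t+1}ᵀ σ_{t+1}` (t = 0,…,T−2), with `ρ'_T := 0` and `σ'_{T−1} := 0`,
the shifted multipliers `λ'_t := λ_{t+1}` (t = 0,…,T−1), `λ'_T := 0`,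
`(μ'_t, ν̲'_t, ν̄'_t) := (μ_{t+1}, ν̲_{t+1}, ν̄_{t+1})` (t = 0,…,T−2), and
`(μ'_{T−1}, ν̲'_{T−1}, ν̄'_{T−1}) := 0`, together with `(ρ'_t)` and `(σ'_t)`, are dual
feasible for the time-varying problem. -/
theorem tv_shifted_multipliers_dual_feasible (n p c m T : ℕ) (hT : 1 ≤ T)
    (qd rd : ℕ → ℕ)
    (A : Matrix (Fin n) (Fin n) ℝ) (B : Matrix (Fin n) (Fin p) ℝ)
    (Q : (t : ℕ) → Matrix (Fin (qd t)) (Fin n) ℝ)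
    (R : (t : ℕ) → Matrix (Fin (rd t)) (Fin p) ℝ)
    (F : Matrix (Fin c) (Fin n) ℝ) (G : Matrix (Fin c) (Fin p) ℝ)
    (V : Matrix (Fin m) (Fin p) ℝ)
    (lam : ℕ → Fin n → ℝ) (rho : (t : ℕ) → Fin (qd t) → ℝ)
    (mu : ℕ → Fin c → ℝ) (nlo nhi : ℕ → Fin m → ℝ)
    (sig : (t : ℕ) → Fin (rd t) → ℝ)
    (hdual : DualFeasibleTV n p c m T qd rd A B Q R F G V lam rho mu nlo nhi sig)
    (rho' : (t : ℕ) → Fin (qd t) → ℝ) (sig' : (t : ℕ) → Fin (rd t) → ℝ)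
    (hrho' : ∀ t < T, (Q t)ᵀ *ᵥ rho' t = (Q (t + 1))ᵀ *ᵥ rho (t + 1))
    (hrho'T : rho' T = 0)
    (hsig' : ∀ t < T - 1, (R t)ᵀ *ᵥ sig' t = (R (t + 1))ᵀ *ᵥ sig (t + 1))
    (hsig'last : sig' (T - 1) = 0) :
    DualFeasibleTV n p c m T qd rd A B Q R F G V
      (fun t => if t < T then lam (t + 1) else 0) rho'
      (fun t => if t + 1 < T then mu (t + 1) else 0)
      (fun t => if t + 1 < T then nlo (t + 1) else 0)
      (fun t => if t + 1 < T then nhi (t + 1) else 0)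
      sig' := by
  obtain ⟨h1, h2, h3, h4, h5, h6⟩ := hdual
  refine ⟨?_, ?_, ?_, ?_, ?_, ?_⟩
  · intro t ht
    by_cases h : t + 1 < T
    · simp only [ht, h, if_true]
      rw [hrho' t ht]
      exact h1 (t + 1) h
    · have hte : t + 1 = T := le_antisymm ht (not_lt.mp h)
      have h2' : (Q (t + 1))ᵀ *ᵥ rho (t + 1) + lam (t + 1) = 0 := by rw [hte]; exact h2
      simp only [ht, if_true, h, if_false, show ¬ t + 1 + 1 < T by omega, hrho' t ht]
      simpa using h2'
  · simp [hrho'T]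
  · intro t ht
    by_cases h : t + 1 < T
    · simp only [h, if_true, hsig' t (by omega)]
      exact h3 (t + 1) h
    · have hte : t = T - 1 := by omega
      subst hte
      simp [show ¬ T - 1 + 1 < T by omega, hsig'last]
  · intro t ht i
    by_cases h : t + 1 < T
    · simp only [h, if_true]; exact h4 (t + 1) h i
    · simp [h]
  · intro t ht i
    by_cases h : t + 1 < T
    · simp only [h, if_true]; exact h5 (t + 1) h i
    · simp [h]
  · intro t ht i
    by_cases h : t + 1 < T
    · simp only [h, if_true]; exact h6 (t + 1) h i
    · simp [h]
end
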